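/- ℓ₁ contains a closed subspace isomorphic to the ℓ₁-direct sum (⊕_{n∈ℕ} ℓ₂ⁿ)_{ℓ₁}. -/

import Mathlib

open scoped ENNReal NNReal

namespace L1Embed

def r (b : Bool) : ℝ := if b then 1 else -1

@[simp] lemma r_true : r true = 1 := rfl
@[simp] lemma r_false : r false = -1 := rfl

lemma sum_cons (n : ℕ) (x : Fin (n+1) → ℝ) (b : Bool) (ε : Fin n → Bool) :
    ∑ i, r ((Fin.cons b ε : Fin (n+1) → Bool) i) * x i
      = r b * x 0 + ∑ i, r (ε i) * x i.succ := by
  rw [Fin.sum_univ_succ]; simp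

lemma sum_succ_split (n : ℕ) (F : (Fin (n+1) → Bool) → ℝ) :
    ∑ ε : Fin (n+1) → Bool, F ε
      = ∑ ε : Fin n → Bool, (F (Fin.cons true ε) + F (Fin.cons false ε)) := by
  rw [← Equiv.sum_comp (Fin.consEquiv (fun _ : Fin (n+1) => Bool)), Fintype.sum_prod_type,
    Fintype.sum_bool]
  simp [Fin.consEquiv, Finset.sum_add_distrib]

lemma mom2 (n : ℕ) (x : Fin n → ℝ) :
    ∑ ε : Fin n → Bool, (∑ i, r (ε i) * x i) ^ 2 = 2 ^ n * ∑ i, (x i) ^ 2 := by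
  induction n with
  | zero => simp
  | succ n ih =>
    rw [sum_succ_split]
    have hx := ih (fun i => x i.succ)
    have key : ∀ ε : Fin n → Bool,
        (∑ i, r ((Fin.cons true ε : Fin (n+1) → Bool) i) * x i) ^ 2
          + (∑ i, r ((Fin.cons false ε : Fin (n+1) → Bool) i) * x i) ^ 2
        = 2 * x 0 ^ 2 + 2 * (∑ i, r (ε i) * x i.succ) ^ 2 := by
      intro ε; rw [sum_cons, sum_cons]; simp only [r_true, r_false]; ring
    rw [Finset.sum_congr rfl fun ε _ => key ε, Finset.sum_add_distrib, Finset.sum_const,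
      ← Finset.mul_sum, hx, Fin.sum_univ_succ (fun i => (x i)^2)]
    simp only [Finset.card_univ, Fintype.card_fun, Fintype.card_bool, Fintype.card_fin,
      nsmul_eq_mul]
    push_cast
    ring

lemma mom4 (n : ℕ) (x : Fin n → ℝ) :
    ∑ ε : Fin n → Bool, (∑ i, r (ε i) * x i) ^ 4
      ≤ 3 * 2 ^ n * (∑ i, (x i) ^ 2) ^ 2 := by
  induction n with
  | zero => simp
  | succ n ih =>
    rw [sum_succ_split]
    have hx2 := mom2 n (fun i => x i.succ)
    have hx4 := ih (fun i => x i.succ)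
    have key : ∀ ε : Fin n → Bool,
        (∑ i, r ((Fin.cons true ε : Fin (n+1) → Bool) i) * x i) ^ 4
          + (∑ i, r ((Fin.cons false ε : Fin (n+1) → Bool) i) * x i) ^ 4
        = 2 * (∑ i, r (ε i) * x i.succ) ^ 4
          + 12 * (∑ i, r (ε i) * x i.succ) ^ 2 * x 0 ^ 2 + 2 * x 0 ^ 4 := by
      intro ε; rw [sum_cons, sum_cons]; simp only [r_true, r_false]; ring
    rw [Finset.sum_congr rfl fun ε _ => key ε, Finset.sum_add_distrib, Finset.sum_add_distrib,
      Finset.sum_const, ← Finset.mul_sum, ← Finset.sum_mul, ← Finset.mul_sum, hx2]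
    rw [Fin.sum_univ_succ (fun i : Fin (n+1) => (x i)^2)]
    simp only [Finset.card_univ, Fintype.card_fun, Fintype.card_bool, Fintype.card_fin,
      nsmul_eq_mul]
    push_cast
    have hS : (0:ℝ) ≤ ∑ i : Fin n, (x i.succ) ^ 2 := Finset.sum_nonneg fun i _ => sq_nonneg _
    have hpow : (2:ℝ) ^ (n+1) = 2 * 2 ^ n := by ring
    rw [hpow]
    nlinarith [hx4, mul_nonneg (pow_nonneg (show (0:ℝ) ≤ 2 by norm_num) n) (pow_nonneg (sq_nonneg (x 0)) 2), mul_nonneg (pow_nonneg (show (0:ℝ) ≤ 2 by norm_num) n) (sq_nonneg (x 0 ^ 2))]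

end L1Embed

namespace L1Embed

/-- abbreviation: the Rademacher sum -/
noncomputable def rad (n : ℕ) (x : Fin n → ℝ) (ε : Fin n → Bool) : ℝ := ∑ i, r (ε i) * x i

lemma khintchine_upper (n : ℕ) (x : Fin n → ℝ) :
    ∑ ε : Fin n → Bool, |rad n x ε| ≤ 2 ^ n * Real.sqrt (∑ i, (x i) ^ 2) := by
  set S := ∑ i, (x i) ^ 2 with hSdef
  have hS : 0 ≤ S := Finset.sum_nonneg fun i _ => sq_nonneg _
  have hcs := Finset.sum_mul_sq_le_sq_mul_sq Finset.univ (fun _ : Fin n → Bool => (1:ℝ))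
    (fun ε => |rad n x ε|)
  simp only [one_mul, one_pow, sq_abs] at hcs
  have hB : ∑ ε : Fin n → Bool, (rad n x ε) ^ 2 = 2 ^ n * S := mom2 n x
  have hcard : ∑ _ε : Fin n → Bool, (1:ℝ) = 2 ^ n := by
    simp [Finset.card_univ]
  rw [hB, hcard] at hcs
  have hA : 0 ≤ ∑ ε : Fin n → Bool, |rad n x ε| :=
    Finset.sum_nonneg fun ε _ => abs_nonneg _
  have hsq : (∑ ε : Fin n → Bool, |rad n x ε|) ^ 2 ≤ (2 ^ n * Real.sqrt S) ^ 2 := by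
    rw [mul_pow, Real.sq_sqrt hS]
    have he : (2:ℝ) ^ n * (2 ^ n * S) = (2 ^ n) ^ 2 * S := by ring
    linarith
  exact (pow_le_pow_iff_left₀ hA (by positivity) two_ne_zero).1 hsq

lemma khintchine_lower (n : ℕ) (x : Fin n → ℝ) :
    2 ^ n * Real.sqrt (∑ i, (x i) ^ 2) ≤
      Real.sqrt 3 * ∑ ε : Fin n → Bool, |rad n x ε| := by
  set S := ∑ i, (x i) ^ 2 with hSdef
  have hS : 0 ≤ S := Finset.sum_nonneg fun i _ => sq_nonneg _
  set A := ∑ ε : Fin n → Bool, |rad n x ε| with hAdef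
  set D := ∑ ε : Fin n → Bool, |rad n x ε| ^ 3 with hDdef
  have hA : 0 ≤ A := Finset.sum_nonneg fun ε _ => abs_nonneg _
  have hD : 0 ≤ D := Finset.sum_nonneg fun ε _ => pow_nonneg (abs_nonneg _) 3
  have hB : ∑ ε : Fin n → Bool, (rad n x ε) ^ 2 = 2 ^ n * S := mom2 n x
  have hC : ∑ ε : Fin n → Bool, (rad n x ε) ^ 4 ≤ 3 * 2 ^ n * S ^ 2 := mom4 n x
  -- first Cauchy-Schwarz : B^2 ≤ A * D
  have cs1 : (2 ^ n * S) ^ 2 ≤ A * D := by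
    have h := Finset.sum_mul_sq_le_sq_mul_sq Finset.univ
      (fun ε : Fin n → Bool => Real.sqrt |rad n x ε|)
      (fun ε => |rad n x ε| * Real.sqrt |rad n x ε|)
    have e1 : ∀ ε : Fin n → Bool,
        Real.sqrt |rad n x ε| * (|rad n x ε| * Real.sqrt |rad n x ε|) = (rad n x ε) ^ 2 := by
      intro ε
      rw [show Real.sqrt |rad n x ε| * (|rad n x ε| * Real.sqrt |rad n x ε|)
        = (Real.sqrt |rad n x ε| * Real.sqrt |rad n x ε|) * |rad n x ε| by ring,
        Real.mul_self_sqrt (abs_nonneg _), ← sq_abs]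
      ring
    have e2 : ∀ ε : Fin n → Bool, (Real.sqrt |rad n x ε|) ^ 2 = |rad n x ε| :=
      fun ε => Real.sq_sqrt (abs_nonneg _)
    have e3 : ∀ ε : Fin n → Bool,
        (|rad n x ε| * Real.sqrt |rad n x ε|) ^ 2 = |rad n x ε| ^ 3 := by
      intro ε
      rw [mul_pow, Real.sq_sqrt (abs_nonneg _)]
      ring
    calc (2 ^ n * S) ^ 2 = (∑ ε : Fin n → Bool, (rad n x ε) ^ 2) ^ 2 := by rw [hB]
      _ = (∑ ε : Fin n → Bool,
            Real.sqrt |rad n x ε| * (|rad n x ε| * Real.sqrt |rad n x ε|)) ^ 2 := by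
          rw [Finset.sum_congr rfl fun ε _ => e1 ε]
      _ ≤ (∑ ε : Fin n → Bool, (Real.sqrt |rad n x ε|) ^ 2) *
            (∑ ε : Fin n → Bool, (|rad n x ε| * Real.sqrt |rad n x ε|) ^ 2) := h
      _ = A * D := by
          rw [Finset.sum_congr rfl fun ε _ => e2 ε, Finset.sum_congr rfl fun ε _ => e3 ε]
  -- second Cauchy-Schwarz : D^2 ≤ B * C
  have cs2 : D ^ 2 ≤ (2 ^ n * S) * (3 * 2 ^ n * S ^ 2) := by
    have h := Finset.sum_mul_sq_le_sq_mul_sq Finset.univ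
      (fun ε : Fin n → Bool => |rad n x ε|)
      (fun ε => (rad n x ε) ^ 2)
    have e1 : ∀ ε : Fin n → Bool, |rad n x ε| * (rad n x ε) ^ 2 = |rad n x ε| ^ 3 := by
      intro ε; rw [← sq_abs]; ring
    have e2 : ∀ ε : Fin n → Bool, ((rad n x ε) ^ 2) ^ 2 = (rad n x ε) ^ 4 := by
      intro ε; ring
    rw [Finset.sum_congr rfl fun ε _ => e1 ε, Finset.sum_congr rfl fun ε _ => e2 ε] at h
    simp only [sq_abs] at h
    rw [hB] at h
    have hBnn : (0:ℝ) ≤ 2 ^ n * S := by positivity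
    calc D ^ 2 ≤ (2 ^ n * S) * ∑ ε : Fin n → Bool, (rad n x ε) ^ 4 := by
          simpa [sq_abs] using h
      _ ≤ (2 ^ n * S) * (3 * 2 ^ n * S ^ 2) := by
          exact mul_le_mul_of_nonneg_left hC hBnn
  -- combine
  rcases eq_or_lt_of_le hS with hS0 | hSpos
  · rw [← hS0]
    simp
    exact hA
  · -- S > 0
    have hP : (0:ℝ) < 2 ^ n := pow_pos (by norm_num) n
    have h3 : (0:ℝ) < Real.sqrt 3 := Real.sqrt_pos.2 (by norm_num)
    have hs3 : Real.sqrt 3 ^ 2 = 3 := Real.sq_sqrt (by norm_num)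
    have hsS : Real.sqrt S ^ 2 = S := Real.sq_sqrt hS
    have hApos : 0 < A := by
      rcases lt_or_ge 0 A with h | h
      · exact h
      · exfalso
        have hA0 : A = 0 := le_antisymm h hA
        rw [hA0, zero_mul] at cs1
        nlinarith [pow_pos (mul_pos hP hSpos) 2]
    -- B^4 ≤ A^2 D^2 ≤ A^2 B C  ⇒  B^3 ≤ A^2 C
    have key : (2 ^ n * S) ^ 3 ≤ A ^ 2 * (3 * 2 ^ n * S ^ 2) := by
      have h1 : ((2 ^ n * S) ^ 2) ^ 2 ≤ (A * D) ^ 2 := by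
        apply pow_le_pow_left₀ (by positivity) cs1
      have h2 : (A * D) ^ 2 = A ^ 2 * D ^ 2 := by ring
      have h3' : A ^ 2 * D ^ 2 ≤ A ^ 2 * ((2 ^ n * S) * (3 * 2 ^ n * S ^ 2)) :=
        mul_le_mul_of_nonneg_left cs2 (sq_nonneg A)
      have hBpos : (0:ℝ) < 2 ^ n * S := by positivity
      nlinarith
    -- conclude  (2^n √S)^2 ≤ (√3 A)^2
    have hpos2 : (0:ℝ) < 2 ^ n * S ^ 2 := by positivity
    have hmain : (2 ^ n) ^ 2 * S ≤ 3 * A ^ 2 := by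
      refine le_of_mul_le_mul_right ?_ hpos2
      calc (2 ^ n) ^ 2 * S * (2 ^ n * S ^ 2) = (2 ^ n * S) ^ 3 := by ring
        _ ≤ A ^ 2 * (3 * 2 ^ n * S ^ 2) := key
        _ = 3 * A ^ 2 * (2 ^ n * S ^ 2) := by ring
    have hsq : (2 ^ n * Real.sqrt S) ^ 2 ≤ (Real.sqrt 3 * A) ^ 2 := by
      calc (2 ^ n * Real.sqrt S) ^ 2 = (2 ^ n) ^ 2 * S := by rw [mul_pow, hsS]
        _ ≤ 3 * A ^ 2 := hmain
        _ = (Real.sqrt 3 * A) ^ 2 := by rw [mul_pow, hs3]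
    exact (pow_le_pow_iff_left₀ (by positivity) (by positivity) two_ne_zero).1 hsq

end L1Embed

namespace L1Embed

/-- block sum -/
noncomputable def blocksum (n : ℕ) (x : Fin n → ℝ) : ℝ :=
  ∑ ε : Fin n → Bool, |((2:ℝ) ^ n)⁻¹ * rad n x ε|

lemma blocksum_eq (n : ℕ) (x : Fin n → ℝ) :
    blocksum n x = ((2:ℝ) ^ n)⁻¹ * ∑ ε : Fin n → Bool, |rad n x ε| := by
  rw [blocksum, Finset.mul_sum]
  refine Finset.sum_congr rfl fun ε _ => ?_
  rw [abs_mul, abs_of_nonneg (by positivity : (0:ℝ) ≤ ((2:ℝ) ^ n)⁻¹)]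

lemma blocksum_nonneg (n : ℕ) (x : Fin n → ℝ) : 0 ≤ blocksum n x :=
  Finset.sum_nonneg fun ε _ => abs_nonneg _

lemma norm_euclidean (n : ℕ) (x : EuclideanSpace ℝ (Fin n)) :
    ‖x‖ = Real.sqrt (∑ i, (x i) ^ 2) := by
  rw [EuclideanSpace.norm_eq]
  congr 1
  exact Finset.sum_congr rfl fun i _ => by rw [Real.norm_eq_abs, sq_abs]

lemma blocksum_le (n : ℕ) (x : EuclideanSpace ℝ (Fin n)) : blocksum n x ≤ ‖x‖ := by
  rw [blocksum_eq, norm_euclidean]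
  rw [inv_mul_le_iff₀ (by positivity : (0:ℝ) < (2:ℝ) ^ n)]
  exact khintchine_upper n x

lemma le_blocksum (n : ℕ) (x : EuclideanSpace ℝ (Fin n)) :
    ‖x‖ ≤ Real.sqrt 3 * blocksum n x := by
  rw [blocksum_eq, norm_euclidean]
  have h := khintchine_lower n x
  have hp : (0:ℝ) < (2:ℝ) ^ n := by positivity
  rw [show Real.sqrt 3 * (((2:ℝ) ^ n)⁻¹ * ∑ ε : Fin n → Bool, |rad n x ε|)
    = ((2:ℝ) ^ n)⁻¹ * (Real.sqrt 3 * ∑ ε : Fin n → Bool, |rad n x ε|) by ring,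
    le_inv_mul_iff₀ hp]
  exact h

/-- The index type -/
abbrev Idx : Type := Σ n : ℕ, Fin n → Bool

instance : Infinite Idx :=
  Infinite.of_injective (fun n : ℕ => (⟨n, fun _ => true⟩ : Idx))
    fun a b h => congrArg Sigma.fst h

noncomputable def eI : ℕ ≃ Idx := Classical.choice nonempty_equiv_of_countable

/-- The coordinates of the embedding -/
noncomputable def T0 (f : ∀ n, EuclideanSpace ℝ (Fin n)) (j : Idx) : ℝ :=
  ((2:ℝ) ^ j.1)⁻¹ * rad j.1 (f j.1) j.2

lemma norm_lp_one {F : ℕ → Type*} [∀ i, NormedAddCommGroup (F i)] (f : lp F 1) :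
    ‖f‖ = ∑' i, ‖f i‖ := by
  rw [lp.norm_eq_tsum_rpow (by simp) f]
  simp [Real.rpow_one]

lemma summable_norm {F : ℕ → Type*} [∀ i, NormedAddCommGroup (F i)] (f : lp F 1) :
    Summable fun i => ‖f i‖ := by
  have := Memℓp.summable (by simp : 0 < (1:ℝ≥0∞).toReal) (lp.memℓp f)
  simpa [Real.rpow_one] using this

lemma summable_T0 (f : lp (fun n => EuclideanSpace ℝ (Fin n)) 1) :
    Summable fun j : Idx => |T0 (⇑f) j| := by
  rw [summable_sigma_of_nonneg (fun j => abs_nonneg _)]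
  constructor
  · exact fun n => (hasSum_fintype _).summable
  · have heq : ∀ n : ℕ, ∑' ε : Fin n → Bool, |T0 (⇑f) ⟨n, ε⟩| = blocksum n (f n) := by
      intro n
      rw [tsum_fintype]
      rfl
    refine Summable.of_nonneg_of_le (fun n => ?_) (fun n => ?_) (summable_norm f)
    · rw [heq n]; exact blocksum_nonneg n (f n)
    · rw [heq n]; exact blocksum_le n (f n)

lemma tsum_T0 (f : lp (fun n => EuclideanSpace ℝ (Fin n)) 1) :
    ∑' j : Idx, |T0 (⇑f) j| = ∑' n : ℕ, blocksum n (f n) := by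
  rw [Summable.tsum_sigma' (fun n => (hasSum_fintype _).summable) (summable_T0 f)]
  exact tsum_congr fun n => by rw [tsum_fintype]; rfl

lemma memℓp_T0 (f : lp (fun n => EuclideanSpace ℝ (Fin n)) 1) :
    Memℓp (fun m => T0 (⇑f) (eI m)) 1 := by
  apply memℓp_gen
  have : (fun m => ‖T0 (⇑f) (eI m)‖ ^ (1:ℝ≥0∞).toReal) = fun m => |T0 (⇑f) (eI m)| := by
    funext m; simp [Real.rpow_one, Real.norm_eq_abs]
  rw [this]
  exact (summable_T0 f).comp_injective eI.injective

end L1Embed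

namespace L1Embed

lemma T0_add (f g : lp (fun n => EuclideanSpace ℝ (Fin n)) 1) (j : Idx) :
    T0 (⇑(f + g)) j = T0 (⇑f) j + T0 (⇑g) j := by
  rcases j with ⟨n, ε⟩
  simp only [T0, rad, lp.coeFn_add, Pi.add_apply, PiLp.add_apply]
  rw [show (∑ i, r (ε i) * ((⇑f n) i + (⇑g n) i))
      = (∑ i, r (ε i) * (⇑f n) i) + ∑ i, r (ε i) * (⇑g n) i by
    rw [← Finset.sum_add_distrib]; exact Finset.sum_congr rfl fun i _ => by ring]
  ring

lemma T0_smul (c : ℝ) (f : lp (fun n => EuclideanSpace ℝ (Fin n)) 1) (j : Idx) :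
    T0 (⇑(c • f)) j = c * T0 (⇑f) j := by
  rcases j with ⟨n, ε⟩
  simp only [T0, rad, lp.coeFn_smul, Pi.smul_apply, PiLp.smul_apply, smul_eq_mul]
  rw [show (∑ i, r (ε i) * (c * (⇑f n) i)) = c * ∑ i, r (ε i) * (⇑f n) i by
    rw [Finset.mul_sum]; exact Finset.sum_congr rfl fun i _ => by ring]
  ring

/-- The embedding as a function to `ℓ¹(ℕ)`. -/
noncomputable def Tfun (f : lp (fun n => EuclideanSpace ℝ (Fin n)) 1) :
    lp (fun _ : ℕ => ℝ) 1 := ⟨fun m => T0 (⇑f) (eI m), memℓp_T0 f⟩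

lemma Tfun_apply (f : lp (fun n => EuclideanSpace ℝ (Fin n)) 1) (m : ℕ) :
    (Tfun f) m = T0 (⇑f) (eI m) := rfl

lemma summable_blocksum (f : lp (fun n => EuclideanSpace ℝ (Fin n)) 1) :
    Summable fun n => blocksum n (f n) :=
  Summable.of_nonneg_of_le (fun n => blocksum_nonneg n (f n))
    (fun n => blocksum_le n (f n)) (summable_norm f)

lemma norm_Tfun (f : lp (fun n => EuclideanSpace ℝ (Fin n)) 1) :
    ‖Tfun f‖ = ∑' n, blocksum n (f n) := by
  rw [norm_lp_one]
  have h1 : ∀ m : ℕ, ‖(Tfun f) m‖ = |T0 (⇑f) (eI m)| := fun m => by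
    rw [Tfun_apply, Real.norm_eq_abs]
  rw [tsum_congr h1, Equiv.tsum_eq eI (fun j => |T0 (⇑f) j|), tsum_T0]

lemma norm_Tfun_le (f : lp (fun n => EuclideanSpace ℝ (Fin n)) 1) :
    ‖Tfun f‖ ≤ ‖f‖ := by
  rw [norm_Tfun, norm_lp_one]
  exact Summable.tsum_le_tsum (fun n => blocksum_le n (f n)) (summable_blocksum f) (summable_norm f)

lemma le_norm_Tfun (f : lp (fun n => EuclideanSpace ℝ (Fin n)) 1) :
    ‖f‖ ≤ Real.sqrt 3 * ‖Tfun f‖ := by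
  rw [norm_Tfun, norm_lp_one, ← tsum_mul_left]
  exact Summable.tsum_le_tsum (fun n => le_blocksum n (f n)) (summable_norm f)
    ((summable_blocksum f).mul_left _)

/-- The embedding as a continuous linear map. -/
noncomputable def T : lp (fun n => EuclideanSpace ℝ (Fin n)) 1 →L[ℝ] lp (fun _ : ℕ => ℝ) 1 :=
  LinearMap.mkContinuous
    { toFun := Tfun
      map_add' := fun f g => by
        apply lp.ext
        funext m
        rw [lp.coeFn_add]
        show T0 (⇑(f + g)) (eI m) = (Tfun f) m + (Tfun g) m
        rw [T0_add, Tfun_apply, Tfun_apply]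
      map_smul' := fun c f => by
        apply lp.ext
        funext m
        rw [lp.coeFn_smul]
        show T0 (⇑(c • f)) (eI m) = c • (Tfun f) m
        rw [T0_smul, Tfun_apply, smul_eq_mul] }
    1 (fun f => by simpa using norm_Tfun_le f)

lemma T_apply (f : lp (fun n => EuclideanSpace ℝ (Fin n)) 1) : T f = Tfun f := rfl

lemma T_antilipschitz : AntilipschitzWith (⟨Real.sqrt 3, Real.sqrt_nonneg 3⟩ : ℝ≥0) T :=
  T.antilipschitz_of_bound fun f => by
    rw [T_apply]
    exact le_norm_Tfun f

theorem main :
    ∃ S : Submodule ℝ (lp (fun _ : ℕ => ℝ) 1),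
      IsClosed (S : Set (lp (fun _ : ℕ => ℝ) 1)) ∧
      Nonempty (↥(lp (fun n => EuclideanSpace ℝ (Fin n)) 1) ≃L[ℝ] ↥S) := by
  refine ⟨LinearMap.range T.toLinearMap, ?_, ?_⟩
  · have h := T_antilipschitz.isClosed_range T.uniformContinuous
    rw [LinearMap.coe_range]
    exact h
  · have hclosed : IsClosed ((LinearMap.range T.toLinearMap : Submodule ℝ (lp (fun _ : ℕ => ℝ) 1)) :
        Set (lp (fun _ : ℕ => ℝ) 1)) := by
      have h := T_antilipschitz.isClosed_range T.uniformContinuous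
      rw [LinearMap.coe_range]
      exact h
    haveI : CompleteSpace (LinearMap.range T.toLinearMap : Submodule ℝ (lp (fun _ : ℕ => ℝ) 1)) :=
      hclosed.completeSpace_coe
    have hinj : Function.Injective T := T_antilipschitz.injective
    refine ⟨ContinuousLinearEquiv.ofBijective
      (T.codRestrict (LinearMap.range T.toLinearMap) (fun x => LinearMap.mem_range_self _ x)) ?_ ?_⟩
    · apply LinearMap.ker_eq_bot.mpr
      intro a b h
      apply hinj
      exact congrArg Subtype.val h
    · apply LinearMap.range_eq_top.mpr
      rintro ⟨y, hy⟩
      obtain ⟨x, rfl⟩ := hy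
      exact ⟨x, rfl⟩

end L1Embed

/-- `ℓ₁` contains a closed subspace isomorphic to the `ℓ₁`-direct sum
`(⊕_{n∈ℕ} ℓ₂ⁿ)_{ℓ₁}`. -/
theorem l1_contains_l1_sum_of_euclidean :
    ∃ S : Submodule ℝ (lp (fun _ : ℕ => ℝ) 1),
      IsClosed (S : Set (lp (fun _ : ℕ => ℝ) 1)) ∧
      Nonempty (↥(lp (fun n => EuclideanSpace ℝ (Fin n)) 1) ≃L[ℝ] ↥S) :=
  L1Embed.main
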